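/- There is no self-adjoint dephased complex Hadamard matrix H ∈ M₆(ℂ) whose diagonal is (1, −1, −1, −1, −1, −1). -/

import Mathlib

open Complex Matrix ComplexConjugate

set_option maxRecDepth 20000

/-- A complex Hadamard matrix of order `n`: all entries of absolute value 1
and pairwise orthogonal rows, i.e. `H Hᴴ = n·1`. -/
def IsHadamard {n : ℕ} (H : Matrix (Fin n) (Fin n) ℂ) : Prop :=
  (∀ i j, ‖H i j‖ = 1) ∧ H * Hᴴ = (n : ℂ) • 1

/-- A matrix is dephased if its first row and first column consist of 1's. -/
def IsDephased {n : ℕ} [NeZero n] (H : Matrix (Fin n) (Fin n) ℂ) : Prop :=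
  ∀ k, H 0 k = 1 ∧ H k 0 = 1

/-- Evaluating the characteristic polynomial gives the determinant of `μ•1 - M`. -/
lemma charpoly_eval_aux (M : Matrix (Fin 6) (Fin 6) ℂ) (μ : ℂ) :
    M.charpoly.eval μ = (μ • (1 : Matrix (Fin 6) (Fin 6) ℂ) - M).det := by
  rw [Matrix.charpoly, _root_.eval_det, matPolyEquiv_charmatrix]
  simp [Matrix.scalar, smul_one_eq_diagonal, Pi.algebraMap_def, Algebra.algebraMap_self_apply]

/-- Sum of a multiset whose elements are all `±c` is an integer multiple of `c`. -/
lemma multiset_sum_pm (c : ℂ) (R : Multiset ℂ) (h : ∀ x ∈ R, x = c ∨ x = -c) :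
    ∃ m : ℤ, R.sum = m * c := by
  induction R using Multiset.induction with
  | empty => exact ⟨0, by simp⟩
  | cons a s ih =>
    obtain ⟨m, hm⟩ := ih fun x hx => h x (Multiset.mem_cons_of_mem hx)
    rcases h a (Multiset.mem_cons_self a s) with ha | ha
    · exact ⟨m + 1, by rw [Multiset.sum_cons, hm, ha]; push_cast; ring⟩
    · exact ⟨m - 1, by rw [Multiset.sum_cons, hm, ha]; push_cast; ring⟩

/-- There is no self-adjoint dephased complex Hadamard matrix in
M₆(ℂ) whose diagonal is (1, (-1), (-1), (-1), (-1), (-1)). -/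
theorem no_selfAdjoint_dephased_diag_stmt12 :
    ¬ ∃ H : Matrix (Fin 6) (Fin 6) ℂ,
      _root_.IsHadamard H ∧ Hᴴ = H ∧ IsDephased H ∧
      H 0 0 = 1 ∧ H 1 1 = (-1) ∧ H 2 2 = (-1) ∧
      H 3 3 = (-1) ∧ H 4 4 = (-1) ∧ H 5 5 = (-1) := by
  rintro ⟨H, ⟨-, hH2⟩, hsa, -, h00, h11, h22, h33, h44, h55⟩
  rw [hsa] at hH2
  -- trace is -4
  have htr : H.trace = -4 := by
    simp [Matrix.trace, Matrix.diag, Fin.sum_univ_six, h00, h11, h22, h33, h44, h55]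
    ring
  set c : ℂ := ((Real.sqrt 6 : ℝ) : ℂ) with hc
  have hc2 : c ^ 2 = 6 := by
    rw [hc]
    norm_cast
    rw [Real.sq_sqrt]; norm_num

  have hcne : c ≠ 0 := by
    intro h; rw [h] at hc2; simp at hc2
  -- every root of the charpoly is ±c
  have hroot : ∀ μ ∈ H.charpoly.roots, μ = c ∨ μ = -c := by
    intro μ hμ
    have hne : H.charpoly ≠ 0 := H.charpoly_monic.ne_zero
    have heval : H.charpoly.eval μ = 0 := (Polynomial.mem_roots hne).mp hμ
    rw [charpoly_eval_aux] at heval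
    have hmul : (μ • (1 : Matrix (Fin 6) (Fin 6) ℂ) - H) *
        (μ • (1 : Matrix (Fin 6) (Fin 6) ℂ) + H) = (μ ^ 2 - 6) • 1 := by
      rw [sub_mul, mul_add, mul_add, hH2]
      simp only [smul_mul_assoc, mul_smul_comm, one_mul, mul_one, smul_smul, sub_smul, sq]
      push_cast
      abel
    have hdet : (μ ^ 2 - 6) ^ 6 = 0 := by
      have h := congrArg Matrix.det hmul
      simp only [Matrix.det_mul, heval, zero_mul, Matrix.det_smul, Matrix.det_one, mul_one,
        Fintype.card_fin] at h
      exact h.symm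
    have hz : μ ^ 2 - 6 = 0 := by simpa using hdet
    have hμ2 : μ ^ 2 = 6 := by linear_combination hz
    have : (μ - c) * (μ + c) = 0 := by linear_combination hμ2 - hc2
    rcases mul_eq_zero.mp this with h | h
    · exact Or.inl (by linear_combination h)
    · exact Or.inr (by linear_combination h)
  -- trace = sum of roots
  have hsum : H.trace = H.charpoly.roots.sum := Matrix.trace_eq_sum_roots_charpoly H
  obtain ⟨m, hm⟩ := multiset_sum_pm c H.charpoly.roots hroot
  rw [hsum, hm] at htr
  -- square: m^2 * 6 = 16
  have hsq : (m : ℂ) ^ 2 * 6 = 16 := by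
    have := congrArg (· ^ 2) htr
    simp only [mul_pow] at this
    rw [hc2] at this
    norm_num at this
    linear_combination this
  have h16 : (m : ℤ) ^ 2 * 6 = 16 := by exact_mod_cast hsq
  have : (6 : ℤ) ∣ 16 := ⟨m ^ 2, by linarith⟩
  norm_num at this
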